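/- Let C = 1 − I_{d×d} be the 0-1 cost matrix (c_{ij} = 1 if i ≠ j, c_{ii} = 0). For every α in the probability simplex △^d, the rescaled Sinkhorn negentropy with cost C/ε converges to the negative Gini index as ε → +∞: lim_{ε→+∞} ε · Ω_{C/ε}(α) = (1/2)(Σ_{i=1}^d α_i² − 1). -/

import Mathlib

open Finset Real Filter

noncomputable section

/-- The probability simplex in `ℝ^d`. -/
def simplexS (d : ℕ) : Set (Fin d → ℝ) := stdSimplex ℝ (Fin d)

/-- Transport plans between `α` and `β`: nonnegative matrices with prescribed marginals,
supported where `α i * β j > 0`. -/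
def couplings {d : ℕ} (α β : Fin d → ℝ) : Set (Matrix (Fin d) (Fin d) ℝ) :=
  {p | (∀ i j, 0 ≤ p i j) ∧ (∀ i, ∑ j, p i j = α i) ∧ (∀ j, ∑ i, p i j = β j) ∧
    ∀ i j, α i * β j = 0 → p i j = 0}

/-- The entropy-regularized transport cost of a plan `p` (with the convention `0 log 0 = 0`,
which holds automatically since `Real.log 0 = 0`). -/
def OTcost {d : ℕ} (C : Matrix (Fin d) (Fin d) ℝ) (ε : ℝ) (α β : Fin d → ℝ)
    (p : Matrix (Fin d) (Fin d) ℝ) : ℝ :=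
  (∑ i, ∑ j, p i j * C i j) + ε * ∑ i, ∑ j, p i j * Real.log (p i j / (α i * β j))

/-- Entropy-regularized optimal transport cost `OT_{C,ε}(α,β)`. -/
def OT {d : ℕ} (C : Matrix (Fin d) (Fin d) ℝ) (ε : ℝ) (α β : Fin d → ℝ) : ℝ :=
  sInf (OTcost C ε α β '' couplings α β)

/-- The Sinkhorn negentropy `Ω_C(α) = -(1/2) OT_{C,2}(α,α)`. -/
def Omega {d : ℕ} (C : Matrix (Fin d) (Fin d) ℝ) (α : Fin d → ℝ) : ℝ :=
  -(1 / 2) * OT C 2 α α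

/-! ### Auxiliary lemmas -/

lemma aux_f_deriv (y : ℝ) {t : ℝ} (ht : t ≠ 0) :
    HasDerivAt (fun t : ℝ => t * Real.log t - t * Real.log y - (t - y) - (t - y)^2/2)
      (Real.log t - Real.log y - (t - y)) t := by
  have h1 := Real.hasDerivAt_mul_log ht
  have h2 : HasDerivAt (fun t : ℝ => t * Real.log y) (Real.log y) t := by
    simpa using (hasDerivAt_id t).mul_const (Real.log y)
  have h3 : HasDerivAt (fun t : ℝ => t - y) (1 : ℝ) t := by
    simpa using (hasDerivAt_id t).sub_const y
  have h4 : HasDerivAt (fun t : ℝ => (t - y)^2/2) (t - y) t := by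
    have := (h3.pow 2).div_const 2
    simpa using this.congr_deriv (by ring)
  exact (((h1.sub h2).sub h3).sub h4).congr_deriv (by ring)

lemma aux_g_deriv (y : ℝ) {t : ℝ} (ht : t ≠ 0) :
    HasDerivAt (fun t : ℝ => Real.log t - Real.log y - (t - y)) (t⁻¹ - 1) t := by
  have h3 : HasDerivAt (fun t : ℝ => t - y) (1 : ℝ) t := by
    simpa using (hasDerivAt_id t).sub_const y
  exact (((Real.hasDerivAt_log ht).sub_const (Real.log y)).sub h3).congr_deriv (by ring)

lemma aux_g_mono {y m : ℝ} (hm : 0 < m) :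
    MonotoneOn (fun t : ℝ => Real.log t - Real.log y - (t - y)) (Set.Icc m 1) := by
  apply monotoneOn_of_deriv_nonneg (convex_Icc m 1)
  · intro t ht
    exact ((aux_g_deriv y (ne_of_gt (lt_of_lt_of_le hm ht.1))).continuousAt).continuousWithinAt
  · intro t ht
    rw [interior_Icc] at ht
    exact ((aux_g_deriv y (ne_of_gt (lt_trans hm ht.1))).differentiableAt).differentiableWithinAt
  · intro t ht
    rw [interior_Icc] at ht
    rw [(aux_g_deriv y (ne_of_gt (lt_trans hm ht.1))).deriv]
    have h1 : t ≤ 1 := le_of_lt ht.2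
    have h0 : 0 < t := lt_trans hm ht.1
    have hti : t * t⁻¹ = 1 := mul_inv_cancel₀ (ne_of_gt h0)
    nlinarith [inv_nonneg.2 (le_of_lt h0)]

/-- Key pointwise inequality: for `x, y ∈ [0,1]` (with `x = 0` whenever `y = 0`),
`(x - y) + (x - y)²/2 ≤ x log(x/y)`. -/
lemma key_ineq {x y : ℝ} (hx0 : 0 ≤ x) (hx1 : x ≤ 1) (hy0 : 0 ≤ y) (hy1 : y ≤ 1)
    (hsupp : y = 0 → x = 0) :
    (x - y) + (x - y)^2/2 ≤ x * Real.log (x / y) := by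
  rcases eq_or_lt_of_le hy0 with hy | hy
  · have hx : x = 0 := hsupp hy.symm
    simp [hx, ← hy]
  rcases eq_or_lt_of_le hx0 with hx | hx
  · rw [← hx]
    simp only [zero_sub, div_eq_mul_inv, zero_mul]
    nlinarith
  rw [Real.log_div (ne_of_gt hx) (ne_of_gt hy)]
  set f : ℝ → ℝ := fun t => t * Real.log t - t * Real.log y - (t - y) - (t - y)^2/2 with hf
  have hfy : f y = 0 := by simp [hf]
  have hgoal : 0 ≤ f x → (x - y) + (x - y)^2/2 ≤ x * (Real.log x - Real.log y) := by
    intro h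
    simp only [hf] at h
    nlinarith
  apply hgoal
  rcases le_or_gt y x with hxy | hxy
  · have hmono : MonotoneOn f (Set.Icc y x) := by
      apply monotoneOn_of_deriv_nonneg (convex_Icc y x)
      · intro t ht
        exact ((aux_f_deriv y (ne_of_gt (lt_of_lt_of_le hy ht.1))).continuousAt).continuousWithinAt
      · intro t ht
        rw [interior_Icc] at ht
        exact ((aux_f_deriv y (ne_of_gt (lt_trans hy ht.1))).differentiableAt).differentiableWithinAt
      · intro t ht
        rw [interior_Icc] at ht
        rw [(aux_f_deriv y (ne_of_gt (lt_trans hy ht.1))).deriv]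
        have := aux_g_mono (y := y) hy ⟨le_refl y, hy1⟩
          ⟨le_of_lt ht.1, le_trans (le_of_lt ht.2) hx1⟩ (le_of_lt ht.1)
        simpa using this
    have := hmono ⟨le_refl y, hxy⟩ ⟨hxy, le_refl x⟩ hxy
    rw [hfy] at this
    exact this
  · have hanti : AntitoneOn f (Set.Icc x y) := by
      apply antitoneOn_of_deriv_nonpos (convex_Icc x y)
      · intro t ht
        exact ((aux_f_deriv y (ne_of_gt (lt_of_lt_of_le hx ht.1))).continuousAt).continuousWithinAt
      · intro t ht
        rw [interior_Icc] at ht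
        exact ((aux_f_deriv y (ne_of_gt (lt_trans hx ht.1))).differentiableAt).differentiableWithinAt
      · intro t ht
        rw [interior_Icc] at ht
        rw [(aux_f_deriv y (ne_of_gt (lt_trans hx ht.1))).deriv]
        have := aux_g_mono (y := y) hx ⟨le_of_lt ht.1, le_trans (le_of_lt ht.2) hy1⟩
          ⟨le_of_lt hxy, hy1⟩ (le_of_lt ht.2)
        simp only [sub_self] at this
        simpa using this
    have := hanti ⟨le_refl x, le_of_lt hxy⟩ ⟨le_of_lt hxy, le_refl y⟩ (le_of_lt hxy)
    rw [hfy] at this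
    exact this

lemma aux_qmem {d : ℕ} {α : Fin d → ℝ} (hα0 : ∀ i, 0 ≤ α i) (hα1 : ∑ i, α i = 1) :
    (Matrix.of fun i j => α i * α j) ∈ couplings α α := by
  refine ⟨fun i j => mul_nonneg (hα0 i) (hα0 j), fun i => ?_, fun j => ?_, fun i j h => h⟩
  · simp [Matrix.of_apply, ← Finset.mul_sum, hα1]
  · simp [Matrix.of_apply, ← Finset.sum_mul, hα1]

lemma aux_linear_sum {d : ℕ} {α : Fin d → ℝ} (p : Matrix (Fin d) (Fin d) ℝ)
    (hrow : ∀ i, ∑ j, p i j = α i) (hα1 : ∑ i, α i = 1) :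
    ∑ i, ∑ j, p i j * (if i = j then (0:ℝ) else 1) = 1 - ∑ i, p i i := by
  have h : ∀ i, ∑ j, p i j * (if i = j then (0:ℝ) else 1) = α i - p i i := by
    intro i
    have e : ∀ j, p i j * (if i = j then (0:ℝ) else 1)
        = p i j - (if i = j then p i j else 0) := by
      intro j; split <;> ring
    rw [Finset.sum_congr rfl fun j _ => e j, Finset.sum_sub_distrib, hrow i,
      Finset.sum_ite_eq]
    simp
  rw [Finset.sum_congr rfl fun i _ => h i, Finset.sum_sub_distrib, hα1]

/-- With the 0-1 cost `C = 1 - I`, the rescaled Sinkhorn negentropy `ε · Ω_{C/ε}(α)`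
converges, as `ε → +∞`, to the negative Gini index `(1/2)(Σ_i α_i² - 1)`. -/
theorem sinkhorn_negentropy_limit_gini (d : ℕ) (hd : 1 ≤ d)
    (α : Fin d → ℝ) (hα : α ∈ simplexS d) :
    Filter.Tendsto
      (fun ε : ℝ =>
        ε * Omega (Matrix.of fun i j : Fin d => (if i = j then (0 : ℝ) else 1) / ε) α)
      Filter.atTop (nhds ((1 / 2) * ((∑ i, (α i) ^ 2) - 1))) := by
  rw [simplexS, stdSimplex, Set.mem_setOf_eq] at hα
  obtain ⟨hα0, hα1⟩ := hα
  set S := ∑ i, (α i)^2 with hS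
  have hαle : ∀ i, α i ≤ 1 := by
    intro i; rw [← hα1]
    exact Finset.single_le_sum (fun j _ => hα0 j) (Finset.mem_univ i)
  set q : Matrix (Fin d) (Fin d) ℝ := Matrix.of fun i j => α i * α j with hqdef
  have hqmem : q ∈ couplings α α := aux_qmem hα0 hα1
  set C : ℝ → Matrix (Fin d) (Fin d) ℝ :=
    fun ε => Matrix.of fun i j : Fin d => (if i = j then (0 : ℝ) else 1) / ε with hC
  have hqcost : ∀ ε : ℝ, OTcost (C ε) 2 α α q = (1 - S)/ε := by
    intro ε
    unfold OTcost
    have hent : ∀ i j : Fin d, q i j * Real.log (q i j / (α i * α j)) = 0 := by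
      intro i j
      by_cases h : α i * α j = 0
      · simp [hqdef, Matrix.of_apply, h]
      · simp [hqdef, Matrix.of_apply, div_self h]
    have hz : (∑ i, ∑ j, q i j * Real.log (q i j / (α i * α j))) = 0 := by
      simp only [hent]; simp
    rw [hz]
    simp only [hC, Matrix.of_apply, mul_zero, add_zero]
    have e : ∀ i j : Fin d, q i j * ((if i = j then (0:ℝ) else 1)/ε)
        = q i j * (if i = j then (0:ℝ) else 1) / ε := fun i j => (mul_div_assoc _ _ _).symm
    simp_rw [e, ← Finset.sum_div]
    rw [aux_linear_sum q hqmem.2.1 hα1]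
    congr 1
    have : ∀ i, q i i = (α i)^2 := by intro i; simp [hqdef, Matrix.of_apply, sq]
    rw [Finset.sum_congr rfl fun i _ => this i]
  have hlow : ∀ ε : ℝ, 0 < ε → ∀ p ∈ couplings α α,
      (1 - S) - d/(2*ε) ≤ ε * OTcost (C ε) 2 α α p := by
    intro ε hε p hp
    obtain ⟨hp0, hprow, hpcol, hpsupp⟩ := hp
    set K := ∑ i, ∑ j, p i j * Real.log (p i j / (α i * α j)) with hKdef
    set T := ∑ i, ∑ j, (p i j - α i * α j)^2 with hTdef
    have hp1 : ∀ i j, p i j ≤ 1 := by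
      intro i j
      calc p i j ≤ ∑ j', p i j' :=
            Finset.single_le_sum (fun j' _ => hp0 i j') (Finset.mem_univ j)
        _ = α i := hprow i
        _ ≤ 1 := hαle i
    have hpoint : ∀ i j, (p i j - α i * α j) + (p i j - α i * α j)^2/2
        ≤ p i j * Real.log (p i j / (α i * α j)) := fun i j =>
      key_ineq (hp0 i j) (hp1 i j) (mul_nonneg (hα0 i) (hα0 j))
        (mul_le_one₀ (hαle i) (hα0 j) (hαle j)) (hpsupp i j)
    have hsum_p : ∑ i, ∑ j, p i j = 1 := by
      rw [Finset.sum_congr rfl fun i _ => hprow i, hα1]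
    have hsum_q : ∑ i : Fin d, ∑ j, α i * α j = 1 := by
      simp [← Finset.mul_sum, hα1]
    have hKT : T/2 ≤ K := by
      have h1 : ∑ i, ∑ j, ((p i j - α i*α j) + (p i j - α i*α j)^2/2) ≤ K :=
        Finset.sum_le_sum fun i _ => Finset.sum_le_sum fun j _ => hpoint i j
      have h2 : ∑ i, ∑ j, ((p i j - α i*α j) + (p i j - α i*α j)^2/2)
          = (∑ i, ∑ j, (p i j - α i * α j)) + T/2 := by
        simp_rw [Finset.sum_add_distrib, ← Finset.sum_div]
        rfl
      have h3 : ∑ i, ∑ j, (p i j - α i * α j) = 0 := by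
        simp_rw [Finset.sum_sub_distrib]
        rw [hsum_p, hsum_q]; ring
      rw [h2, h3] at h1; linarith
    have hT0 : 0 ≤ T :=
      Finset.sum_nonneg fun i _ => Finset.sum_nonneg fun j _ => sq_nonneg _
    have hK0 : 0 ≤ K := by linarith
    have hdiag : ∑ i, (p i i - α i * α i)^2 ≤ T :=
      Finset.sum_le_sum fun i _ =>
        Finset.single_le_sum (f := fun j => (p i j - α i * α j)^2)
          (fun j _ => sq_nonneg _) (Finset.mem_univ i)
    set A := ∑ i, |p i i - α i * α i| with hAdef
    have hA2 : A^2 ≤ d * T := by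
      have hcs := Finset.sum_mul_sq_le_sq_mul_sq Finset.univ
        (fun _ : Fin d => (1:ℝ)) (fun i => |p i i - α i * α i|)
      simp only [one_mul, one_pow, sq_abs] at hcs
      calc A^2 ≤ (∑ _i : Fin d, (1:ℝ)) * ∑ i, (p i i - α i * α i)^2 := hcs
        _ = d * ∑ i, (p i i - α i*α i)^2 := by simp
        _ ≤ d * T := mul_le_mul_of_nonneg_left hdiag (by positivity)
    have hA0 : 0 ≤ A := Finset.sum_nonneg fun i _ => abs_nonneg _
    have hAle : A ≤ Real.sqrt (d * T) := by
      rw [show A = Real.sqrt (A^2) by rw [Real.sqrt_sq hA0]]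
      exact Real.sqrt_le_sqrt hA2
    have hsq2 : Real.sqrt (d * T) ≤ Real.sqrt (d * (2*K)) :=
      Real.sqrt_le_sqrt (by nlinarith)
    have hamgm : Real.sqrt (d * (2*K)) ≤ d/(2*ε) + ε*K := by
      have hu : (0:ℝ) ≤ d/ε := by positivity
      have hv : (0:ℝ) ≤ 2*ε*K := by positivity
      have heq : (d : ℝ) * (2*K) = (d/ε) * (2*ε*K) := by
        field_simp
      rw [heq, Real.sqrt_mul hu]
      have h1 := Real.sq_sqrt hu
      have h2 := Real.sq_sqrt hv
      have hhalf : (d:ℝ)/(2*ε) = (d/ε)/2 := by rw [div_div, mul_comm]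
      nlinarith [Real.sqrt_nonneg ((d:ℝ)/ε), Real.sqrt_nonneg (2*ε*K),
        sq_nonneg (Real.sqrt ((d:ℝ)/ε) - Real.sqrt (2*ε*K))]
    have hlin : ∑ i, ∑ j, p i j * (C ε) i j = (1 - ∑ i, p i i)/ε := by
      simp only [hC, Matrix.of_apply]
      have e : ∀ i j : Fin d, p i j * ((if i = j then (0:ℝ) else 1)/ε)
          = p i j * (if i = j then (0:ℝ) else 1) / ε := fun i j => (mul_div_assoc _ _ _).symm
      simp_rw [e, ← Finset.sum_div]
      rw [aux_linear_sum p hprow hα1]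
    have hdiagsum : ∑ i, (p i i - α i * α i) ≤ A :=
      Finset.sum_le_sum fun i _ => le_abs_self _
    have hSS : ∑ i, α i * α i = S := by
      rw [hS]; exact Finset.sum_congr rfl fun i _ => (sq (α i)).symm
    have hdsum : ∑ i, (p i i - α i * α i) = (∑ i, p i i) - S := by
      rw [Finset.sum_sub_distrib, hSS]
    have hεOT : ε * OTcost (C ε) 2 α α p = (1 - ∑ i, p i i) + 2*ε*K := by
      unfold OTcost
      rw [hlin, ← hKdef]
      field_simp
    rw [hεOT]
    have hεK : 0 ≤ ε * K := mul_nonneg hε.le hK0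
    have hchain : (∑ i, p i i) - S ≤ d/(2*ε) + ε*K := by
      rw [← hdsum]
      calc ∑ i, (p i i - α i * α i) ≤ A := hdiagsum
        _ ≤ Real.sqrt (d * T) := hAle
        _ ≤ Real.sqrt (d * (2*K)) := hsq2
        _ ≤ d/(2*ε) + ε*K := hamgm
    linarith
  -- Bounds on ε * Omega
  have hbounds : ∀ ε : ℝ, 1 ≤ ε →
      (1/2)*(S-1) ≤ ε * Omega (C ε) α ∧
      ε * Omega (C ε) α ≤ (1/2)*(S-1) + d/(4*ε) := by
    intro ε hε1
    have hε : (0:ℝ) < ε := lt_of_lt_of_le one_pos hε1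
    have himg_ne : (OTcost (C ε) 2 α α '' couplings α α).Nonempty := ⟨_, q, hqmem, rfl⟩
    have hmemlb : ∀ b ∈ OTcost (C ε) 2 α α '' couplings α α,
        ((1 - S) - d/(2*ε))/ε ≤ b := by
      rintro b ⟨p, hp, rfl⟩
      rw [div_le_iff₀' hε]
      exact hlow ε hε p hp
    have hbdd : BddBelow (OTcost (C ε) 2 α α '' couplings α α) :=
      ⟨((1 - S) - d/(2*ε))/ε, hmemlb⟩
    have hub : OT (C ε) 2 α α ≤ (1-S)/ε := by
      unfold OT
      have := csInf_le hbdd ⟨q, hqmem, rfl⟩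
      rwa [hqcost ε] at this
    have hlb : ((1 - S) - d/(2*ε))/ε ≤ OT (C ε) 2 α α := by
      unfold OT; exact le_csInf himg_ne hmemlb
    have hOm : ε * Omega (C ε) α = -(1/2)*(ε * OT (C ε) 2 α α) := by
      unfold Omega; ring
    have hub' : ε * OT (C ε) 2 α α ≤ 1 - S := by
      have h := mul_le_mul_of_nonneg_left hub hε.le
      have he : ε * ((1-S)/ε) = 1 - S := by field_simp
      rwa [he] at h
    have hlb' : (1 - S) - d/(2*ε) ≤ ε * OT (C ε) 2 α α := by
      have h := mul_le_mul_of_nonneg_left hlb hε.le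
      have he : ε * (((1 - S) - d/(2*ε))/ε) = (1 - S) - d/(2*ε) := by
        rw [mul_comm]; exact div_mul_cancel₀ _ hε.ne'
      rwa [he] at h
    constructor
    · rw [hOm]; linarith
    · rw [hOm]
      have hd4 : (1:ℝ)/2 * (d/(2*ε)) = d/(4*ε) := by
        rw [div_mul_eq_mul_div, mul_div_assoc]
        rw [div_div]
        ring_nf
      calc -(1/2)*(ε * OT (C ε) 2 α α) ≤ -(1/2)*((1 - S) - d/(2*ε)) := by linarith
        _ = (1/2)*(S-1) + (1/2)*(d/(2*ε)) := by ring
        _ = (1/2)*(S-1) + d/(4*ε) := by rw [hd4]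
  have htop : Tendsto (fun ε : ℝ => (1/2)*(S-1) + (d:ℝ)/(4*ε)) atTop
      (nhds ((1/2)*(S-1))) := by
    have h0 : Tendsto (fun ε : ℝ => (d:ℝ)/(4*ε)) atTop (nhds 0) := by
      have h := tendsto_inv_atTop_zero.const_mul ((d:ℝ)/4)
      rw [mul_zero] at h
      refine h.congr fun ε => ?_
      rw [← div_eq_mul_inv, div_div]
    simpa using tendsto_const_nhds.add h0
  refine tendsto_of_tendsto_of_tendsto_of_le_of_le' tendsto_const_nhds htop ?_ ?_
  · filter_upwards [eventually_ge_atTop (1:ℝ)] with ε hε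
    exact (hbounds ε hε).1
  · filter_upwards [eventually_ge_atTop (1:ℝ)] with ε hε
    exact (hbounds ε hε).2
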